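/- Let a > 0, b > 0, g ∈ ℝ, c ∈ ℝ and w > 0 with |c| < w^a. Then the Laplace transform ∫_0^∞ e^{-wt} t^{b-1} E_{a,b}^{g}(c t^a) dt equals w^{ag-b} (w^a - c)^{-g}. -/

import Mathlib

open MeasureTheory Real
open Filter Topology

/-- Pochhammer symbol `(g)_k = g (g+1) ⋯ (g+k-1)`. -/
noncomputable def poch (g : ℝ) (k : ℕ) : ℝ := ∏ i ∈ Finset.range k, (g + i)

lemma poch_zero (g : ℝ) : poch g 0 = 1 := by simp [poch]

lemma poch_succ (g : ℝ) (k : ℕ) : poch g (k + 1) = poch g k * (g + k) := by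
  simp [poch, Finset.prod_range_succ]

lemma poch_pos {G : ℝ} (hG : 0 < G) (k : ℕ) : 0 < poch G k :=
  Finset.prod_pos fun i _ => by positivity

lemma abs_poch_le (g : ℝ) (k : ℕ) : |poch g k| ≤ poch (|g| + 1) k := by
  rw [poch, poch, Finset.abs_prod]
  refine Finset.prod_le_prod (fun i _ => abs_nonneg _) (fun i _ => ?_)
  calc |g + (i : ℝ)| ≤ |g| + |(i : ℝ)| := abs_add_le _ _
    _ ≤ |g| + 1 + i := by
        rw [abs_of_nonneg (show (0:ℝ) ≤ (i:ℝ) from Nat.cast_nonneg i)]; linarith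

lemma summable_poch_shift {G x : ℝ} (hG : 0 < G) (hx : 0 ≤ x) (h1 : x < 1) (j : ℕ) :
    Summable (fun k : ℕ => poch G (k + j) * x ^ k / (Nat.factorial k : ℝ)) := by
  rcases eq_or_lt_of_le hx with h0 | h0
  · apply summable_of_ne_finset_zero (s := {0})
    intro k hk
    simp only [Finset.mem_singleton] at hk
    simp [← h0, zero_pow hk]
  · apply summable_of_ratio_test_tendsto_lt_one h1
    · filter_upwards with k
      have h1 := poch_pos hG (k + j)
      have h2 := Nat.factorial_pos k
      positivity
    · have key : Tendsto (fun k : ℕ => (1 + (G + j - 1) * (1 / ((k : ℝ) + 1))) * x)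
          atTop (𝓝 x) := by
        have h2 : Tendsto (fun k : ℕ => 1 + (G + j - 1) * (1 / ((k : ℝ) + 1)))
            atTop (𝓝 (1 + (G + j - 1) * 0)) :=
          tendsto_const_nhds.add (tendsto_const_nhds.mul tendsto_one_div_add_atTop_nhds_zero_nat)
        simpa using h2.mul_const x
      refine Tendsto.congr (fun k => ?_) key
      have hp := poch_pos hG (k + j)
      have hp' := poch_pos hG (k + 1 + j)
      have hf : (0:ℝ) < (Nat.factorial k : ℝ) := by exact_mod_cast Nat.factorial_pos k
      have hf' : (0:ℝ) < (Nat.factorial (k+1) : ℝ) := by exact_mod_cast Nat.factorial_pos (k+1)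
      have e1 : poch G (k + 1 + j) = poch G (k + j) * (G + (k + j)) := by
        rw [show k + 1 + j = (k + j) + 1 by ring, poch_succ]
        push_cast; ring_nf
      have e2 : (Nat.factorial (k + 1) : ℝ) = (k + 1) * Nat.factorial k := by
        rw [Nat.factorial_succ]; push_cast; ring
      rw [Real.norm_of_nonneg (by positivity), Real.norm_of_nonneg (by positivity), e1, e2]
      have hk1 : (0:ℝ) < (k:ℝ) + 1 := by positivity
      field_simp
      ring

lemma summable_binom {g x : ℝ} (hx : |x| < 1) :
    Summable (fun k : ℕ => poch g k * x ^ k / (Nat.factorial k : ℝ)) := by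
  refine Summable.of_norm_bounded
    ((summable_poch_shift (G := |g| + 1) (by positivity) (abs_nonneg x) hx 0)) (fun k => ?_)
  have hf : (0:ℝ) < (Nat.factorial k : ℝ) := by exact_mod_cast Nat.factorial_pos k
  rw [Real.norm_eq_abs, abs_div, abs_mul, abs_pow, abs_of_pos hf]
  simp only [add_zero]
  gcongr
  exact abs_poch_le g k

lemma binomial_tsum {g x : ℝ} (hx : |x| < 1) :
    ∑' k : ℕ, poch g k * x ^ k / (Nat.factorial k : ℝ) = (1 - x) ^ (-g) := by
  set G : ℝ := |g| + 1 with hGdef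
  have hG : 0 < G := by positivity
  set r : ℝ := (|x| + 1) / 2 with hrdef
  have hr0 : 0 < r := by positivity
  have hxr : |x| < r := by simp only [hrdef]; linarith
  have hr1 : r < 1 := by simp only [hrdef]; linarith
  set f : ℝ → ℝ := fun y => ∑' k : ℕ, poch g k * y ^ k / (Nat.factorial k : ℝ) with hfdef
  set u : ℕ → ℝ := fun n => poch G (n + 1) * r ^ (n - 1) / (Nat.factorial (n - 1) : ℝ) with hudef
  have hu : Summable u := by
    rw [← summable_nat_add_iff 1]
    have := summable_poch_shift hG hr0.le hr1 2
    refine this.congr fun n => ?_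
    simp [hudef, Nat.add_sub_cancel, show n + 1 + 1 = n + 2 by ring]
  -- derivative bound
  have hbound : ∀ (n : ℕ) (y : ℝ), y ∈ Set.Ioo (-r) r →
      ‖poch g n * ((n : ℝ) * y ^ (n - 1)) / (Nat.factorial n : ℝ)‖ ≤ u n := by
    rintro n y ⟨hy1, hy2⟩
    have hyr : |y| ≤ r := by rw [abs_le]; constructor <;> linarith
    match n with
    | 0 =>
      simp only [Nat.cast_zero, zero_mul, mul_zero, zero_div, norm_zero, hudef]
      exact div_nonneg (mul_nonneg (poch_pos hG _).le (pow_nonneg hr0.le _)) (Nat.cast_nonneg _)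
    | Nat.succ m =>
      have hf : (0:ℝ) < (Nat.factorial (m+1) : ℝ) := by exact_mod_cast Nat.factorial_pos (m+1)
      have hfm : (0:ℝ) < (Nat.factorial m : ℝ) := by exact_mod_cast Nat.factorial_pos m
      have e2 : (Nat.factorial (m + 1) : ℝ) = (m + 1) * Nat.factorial m := by
        rw [Nat.factorial_succ]; push_cast; ring
      simp only [Nat.succ_sub_one, hudef]
      rw [Real.norm_eq_abs, abs_div, abs_of_pos hf, abs_mul, abs_mul, abs_pow, e2]
      rw [Nat.cast_succ, abs_of_pos (show (0:ℝ) < (m:ℝ)+1 by positivity)]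
      have h1 : |poch g (m+1)| ≤ poch G (m+1) := abs_poch_le g (m+1)
      have h2 : |y| ^ m ≤ r ^ m := pow_le_pow_left₀ (abs_nonneg y) hyr m
      calc |poch g (m+1)| * (((m:ℝ)+1) * |y| ^ m) / (((m:ℝ)+1) * (Nat.factorial m : ℝ))
          = |poch g (m+1)| * |y| ^ m / (Nat.factorial m : ℝ) := by
            field_simp
        _ ≤ poch G (m+1) * r ^ m / (Nat.factorial m : ℝ) := by
            gcongr
            exact (abs_nonneg _).trans h1
        _ ≤ poch G (m + 2) * r ^ m / (Nat.factorial m : ℝ) := by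
            have hmono : poch G (m + 1) ≤ poch G (m + 2) := by
              conv_rhs => rw [show m + 2 = (m + 1) + 1 by ring, poch_succ]
              refine le_mul_of_one_le_right (poch_pos hG (m+1)).le ?_
              have h1 : (0:ℝ) ≤ |g| := abs_nonneg g
              have h2 : (0:ℝ) ≤ ((m:ℝ)+1) := by positivity
              simp only [hGdef]
              push_cast
              linarith
            gcongr
        _ = poch G (m + 1 + 1) * r ^ (m + 1 - 1) / (Nat.factorial (m + 1 - 1) : ℝ) := by
            norm_num
  -- summable at 0
  have hsum0 : Summable (fun n : ℕ => poch g n * (0:ℝ) ^ n / (Nat.factorial n : ℝ)) := by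
    apply summable_of_ne_finset_zero (s := {0})
    intro k hk
    simp only [Finset.mem_singleton] at hk
    simp [zero_pow hk]
  -- derivative of f on Ioo (-r) r
  have hderiv : ∀ y ∈ Set.Ioo (-r) r, HasDerivAt f
      (∑' n : ℕ, poch g n * ((n : ℝ) * y ^ (n - 1)) / (Nat.factorial n : ℝ)) y := by
    intro y hy
    refine hasDerivAt_tsum_of_isPreconnected hu isOpen_Ioo (convex_Ioo _ _).isPreconnected
      (fun n z _ => ?_) hbound (Set.mem_Ioo.mpr ⟨by linarith, hr0⟩) hsum0 hy
    exact ((hasDerivAt_pow n z).const_mul (poch g n)).div_const _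
  have hDsum : ∀ y ∈ Set.Ioo (-r) r, Summable
      (fun n : ℕ => poch g n * ((n : ℝ) * y ^ (n - 1)) / (Nat.factorial n : ℝ)) :=
    fun y hy => Summable.of_norm_bounded hu (fun n => hbound n y hy)
  have hODE : ∀ y ∈ Set.Ioo (-r) r,
      (1 - y) * (∑' n : ℕ, poch g n * ((n : ℝ) * y ^ (n - 1)) / (Nat.factorial n : ℝ))
        = g * f y := by
    intro y hy
    have hyabs : |y| < 1 := by
      rw [abs_lt]; exact ⟨by linarith [hy.1], by linarith [hy.2]⟩
    have hsf : Summable (fun k : ℕ => poch g k * y ^ k / (Nat.factorial k : ℝ)) :=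
      summable_binom hyabs
    have hsD := hDsum y hy
    have e1 : (∑' n : ℕ, poch g n * ((n : ℝ) * y ^ (n - 1)) / (Nat.factorial n : ℝ))
        = ∑' n : ℕ, poch g (n + 1) * y ^ n / (Nat.factorial n : ℝ) := by
      rw [Summable.tsum_eq_zero_add hsD]
      simp only [Nat.cast_zero, zero_mul, mul_zero, zero_div, zero_add]
      refine tsum_congr fun n => ?_
      have e2 : (Nat.factorial (n + 1) : ℝ) = ((n : ℝ) + 1) * Nat.factorial n := by
        rw [Nat.factorial_succ]; push_cast; ring
      have hfm : (0:ℝ) < (Nat.factorial n : ℝ) := by exact_mod_cast Nat.factorial_pos n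
      rw [e2]
      simp only [Nat.add_sub_cancel, Nat.cast_add, Nat.cast_one]
      field_simp
    have key : ∀ n : ℕ, poch g (n + 1) * y ^ n / (Nat.factorial n : ℝ)
        = g * (poch g n * y ^ n / (Nat.factorial n : ℝ))
          + y * (poch g n * ((n : ℝ) * y ^ (n - 1)) / (Nat.factorial n : ℝ)) := by
      intro n
      rw [poch_succ]
      match n with
      | 0 => simp [poch_zero]
      | Nat.succ m =>
        have hfm : (0:ℝ) < (Nat.factorial (m + 1) : ℝ) := by
          exact_mod_cast Nat.factorial_pos (m + 1)
        simp only [Nat.succ_sub_one]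
        push_cast
        field_simp
        simp only [Nat.succ_eq_add_one]
        ring
    have hid : (∑' n : ℕ, poch g (n + 1) * y ^ n / (Nat.factorial n : ℝ))
        = g * f y + y * (∑' n : ℕ, poch g n * ((n : ℝ) * y ^ (n - 1)) / (Nat.factorial n : ℝ)) := by
      rw [tsum_congr key, Summable.tsum_add (hsf.mul_left g) (hsD.mul_left y),
        tsum_mul_left, tsum_mul_left]
    linear_combination e1.trans hid
  set h : ℝ → ℝ := fun y => f y * (1 - y) ^ g with hhdef
  have hderivh : ∀ y ∈ Set.Ioo (-r) r, HasDerivAt h 0 y := by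
    intro y hy
    have h1y : 0 < 1 - y := by have := hy.2; linarith
    have inner : HasDerivAt (fun z : ℝ => 1 - z) (-1) y := (hasDerivAt_id y).const_sub 1
    have outer := Real.hasDerivAt_rpow_const (x := 1 - y) (p := g) (Or.inl h1y.ne')
    have hrp : HasDerivAt (fun z : ℝ => (1 - z) ^ g) (g * (1 - y) ^ (g - 1) * (-1)) y :=
      outer.comp y inner
    have hmul := (hderiv y hy).mul hrp
    refine hmul.congr_deriv ?_
    symm
    have hode := hODE y hy
    have hsplit : (1 - y) ^ g = (1 - y) ^ (g - 1) * (1 - y) := by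
      rw [← Real.rpow_add_one h1y.ne' (g - 1)]
      ring_nf
    rw [hsplit]
    linear_combination (-(1 - y) ^ (g - 1)) * hode
  have hx1 : x < 1 := lt_of_le_of_lt (le_abs_self x) hx
  have hconst : h x = h 0 := by
    rcases le_total 0 x with hx0 | hx0
    · have hmem : ∀ z ∈ Set.Icc (0:ℝ) x, z ∈ Set.Ioo (-r) r := by
        rintro z ⟨hz1, hz2⟩
        have : x ≤ |x| := le_abs_self x
        exact ⟨by linarith, by linarith⟩
      exact constant_of_has_deriv_right_zero
        (fun z hz => ((hderivh z (hmem z hz)).continuousAt).continuousWithinAt)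
        (fun z hz => (hderivh z (hmem z (Set.mem_Icc.mpr ⟨hz.1, hz.2.le⟩))).hasDerivWithinAt)
        x (Set.mem_Icc.mpr ⟨hx0, le_refl x⟩)
    · have hmem : ∀ z ∈ Set.Icc x (0:ℝ), z ∈ Set.Ioo (-r) r := by
        rintro z ⟨hz1, hz2⟩
        have : -|x| ≤ x := neg_abs_le x
        exact ⟨by linarith, by linarith⟩
      exact (constant_of_has_deriv_right_zero
        (fun z hz => ((hderivh z (hmem z hz)).continuousAt).continuousWithinAt)
        (fun z hz => (hderivh z (hmem z (Set.mem_Icc.mpr ⟨hz.1, hz.2.le⟩))).hasDerivWithinAt)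
        0 (Set.mem_Icc.mpr ⟨hx0, le_refl (0:ℝ)⟩)).symm
  have hf0 : f 0 = 1 := by
    rw [hfdef]
    simp only
    rw [tsum_eq_single 0 (fun k hk => by simp [zero_pow hk])]
    simp [poch_zero]
  have hh0 : h 0 = 1 := by
    simp only [hhdef, hf0, sub_zero, Real.one_rpow, one_mul]
  have h1x : 0 < 1 - x := by linarith
  have hgpos : 0 < (1 - x) ^ g := Real.rpow_pos_of_pos h1x g
  have hfx : f x * (1 - x) ^ g = 1 := hconst.trans hh0
  rw [show (∑' k : ℕ, poch g k * x ^ k / (Nat.factorial k : ℝ)) = f x from rfl,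
    Real.rpow_neg h1x.le, inv_eq_one_div, eq_div_iff hgpos.ne']
  exact hfx

/-- Three-parameter (Prabhakar) Mittag-Leffler function. -/
noncomputable def ml3 (a b g x : ℝ) : ℝ :=
  ∑' k : ℕ, poch g k * x ^ k / (Real.Gamma ((k : ℝ) * a + b) * (Nat.factorial k : ℝ))

theorem stmt0 (a b g c w : ℝ) (ha : 0 < a) (hb : 0 < b) (hw : 0 < w)
    (hc : |c| < w ^ a) :
    ∫ t in Set.Ioi (0 : ℝ), Real.exp (-w * t) * t ^ (b - 1) * ml3 a b g (c * t ^ a)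
      = w ^ (a * g - b) * (w ^ a - c) ^ (-g) := by
  have hwa : 0 < w ^ a := Real.rpow_pos_of_pos hw a
  set F : ℕ → ℝ → ℝ := fun k t =>
    (poch g k * c ^ k / (Real.Gamma ((k : ℝ) * a + b) * (Nat.factorial k : ℝ))) *
      (t ^ ((k : ℝ) * a + b - 1) * Real.exp (-(w * t))) with hFdef
  have hs : ∀ k : ℕ, 0 < (k : ℝ) * a + b := by
    intro k
    have : (0:ℝ) ≤ (k : ℝ) * a := by positivity
    linarith
  have hGpos : ∀ k : ℕ, 0 < Real.Gamma ((k : ℝ) * a + b) :=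
    fun k => Real.Gamma_pos_of_pos (hs k)
  have hfacpos : ∀ k : ℕ, (0:ℝ) < (Nat.factorial k : ℝ) :=
    fun k => by exact_mod_cast Nat.factorial_pos k
  -- integrability of each piece
  have hint : ∀ k : ℕ, IntegrableOn
      (fun t : ℝ => t ^ ((k : ℝ) * a + b - 1) * Real.exp (-(w * t))) (Set.Ioi 0) := by
    intro k
    have := integrableOn_rpow_mul_exp_neg_mul_rpow
      (s := (k : ℝ) * a + b - 1) (p := 1) (b := w) (by linarith [hs k]) one_pos hw
    refine this.congr_fun (fun t ht => ?_) measurableSet_Ioi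
    simp only [Real.rpow_one, neg_mul]
  have hFint : ∀ k : ℕ, IntegrableOn (F k) (Set.Ioi 0) :=
    fun k => (hint k).const_mul _
  -- value of each integral
  have hval : ∀ k : ℕ,
      ∫ t in Set.Ioi (0:ℝ), t ^ ((k : ℝ) * a + b - 1) * Real.exp (-(w * t))
        = (1 / w) ^ ((k : ℝ) * a + b) * Real.Gamma ((k : ℝ) * a + b) :=
    fun k => Real.integral_rpow_mul_exp_neg_mul_Ioi (hs k) hw
  -- nonnegativity of the pure integrand
  have hnn : ∀ k : ℕ, ∀ t ∈ Set.Ioi (0:ℝ),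
      (0:ℝ) ≤ t ^ ((k : ℝ) * a + b - 1) * Real.exp (-(w * t)) := by
    intro k t ht
    have : (0:ℝ) < t := ht
    positivity
  set G : ℝ := |g| + 1 with hGdef
  have hG : 0 < G := by positivity
  set x : ℝ := |c| * w ^ (-a) with hxdef
  have hwna : 0 < w ^ (-a) := Real.rpow_pos_of_pos hw _
  have hx0 : 0 ≤ x := by positivity
  have hx1 : x < 1 := by
    rw [hxdef, Real.rpow_neg hw.le, ← div_eq_mul_inv, div_lt_one hwa]
    exact hc
  have hpow : ∀ (y : ℝ) (k : ℕ), (w ^ y) ^ k = w ^ (y * k) := fun y k => by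
    rw [← Real.rpow_natCast (w ^ y) k, ← Real.rpow_mul hw.le]
  have h2 : ∀ k : ℕ, (1 / w) ^ ((k : ℝ) * a + b) = (w ^ (-a)) ^ k * w ^ (-b) := by
    intro k
    rw [hpow (-a) k, ← Real.rpow_add hw, one_div, ← Real.rpow_neg_one w,
      ← Real.rpow_mul hw.le]
    congr 1
    ring
  -- summability of norms of integrals
  have hnormval : ∀ k : ℕ, (∫ t in Set.Ioi (0:ℝ), ‖F k t‖)
      = |poch g k| * |c| ^ k / (Real.Gamma ((k : ℝ) * a + b) * (Nat.factorial k : ℝ)) *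
        ((1 / w) ^ ((k : ℝ) * a + b) * Real.Gamma ((k : ℝ) * a + b)) := by
    intro k
    rw [← hval k, ← integral_const_mul]
    refine setIntegral_congr_fun measurableSet_Ioi (fun t ht => ?_)
    rw [hFdef]
    simp only
    rw [Real.norm_eq_abs, abs_mul, abs_div, abs_mul, abs_pow,
      abs_of_pos (mul_pos (hGpos k) (hfacpos k)), abs_of_nonneg (hnn k t ht)]
  have hsummable : Summable (fun k : ℕ => ∫ t in Set.Ioi (0:ℝ), ‖F k t‖) := by
    rw [funext hnormval]
    have master := (summable_poch_shift hG hx0 hx1 0).mul_left (w ^ (-b))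
    refine Summable.of_nonneg_of_le (fun k => ?_) (fun k => ?_) master
    · have := hGpos k; have := hfacpos k
      positivity
    · have h1 : |poch g k| * |c| ^ k / (Real.Gamma ((k : ℝ) * a + b) * (Nat.factorial k : ℝ)) *
          ((1 / w) ^ ((k : ℝ) * a + b) * Real.Gamma ((k : ℝ) * a + b))
          = |poch g k| * |c| ^ k * (1 / w) ^ ((k : ℝ) * a + b) / (Nat.factorial k : ℝ) := by
        field_simp
      rw [h1, h2 k]
      have h3 : |poch g k| * |c| ^ k * ((w ^ (-a)) ^ k * w ^ (-b)) / (Nat.factorial k : ℝ)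
          = w ^ (-b) * ((|poch g k| * x ^ k) / (Nat.factorial k : ℝ)) := by
        rw [hxdef, mul_pow]
        ring
      rw [h3]
      have h4 : |poch g k| ≤ poch G (k + 0) := by
        simpa using abs_poch_le g k
      have h5 : (0:ℝ) ≤ w ^ (-b) := by positivity
      have := hfacpos k
      gcongr
  -- swap sum and integral
  have hswap := MeasureTheory.integral_tsum_of_summable_integral_norm
    (μ := volume.restrict (Set.Ioi (0:ℝ))) hFint hsummable
  -- pointwise identity of integrands on Ioi 0
  have hpt : ∀ t ∈ Set.Ioi (0:ℝ),
      Real.exp (-w * t) * t ^ (b - 1) * ml3 a b g (c * t ^ a) = ∑' k : ℕ, F k t := by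
    intro t ht
    have ht0 : (0:ℝ) < t := ht
    rw [ml3, ← tsum_mul_left]
    refine tsum_congr fun k => ?_
    rw [hFdef]
    simp only
    have e1 : t ^ ((k : ℝ) * a + b - 1) = t ^ (b - 1) * (t ^ a) ^ k := by
      rw [← Real.rpow_natCast (t ^ a) k, ← Real.rpow_mul ht0.le, ← Real.rpow_add ht0]
      ring_nf
    rw [e1, mul_pow, neg_mul]
    ring
  rw [setIntegral_congr_fun measurableSet_Ioi hpt, ← hswap]
  -- compute the sum
  have hterm : ∀ k : ℕ, (∫ t in Set.Ioi (0:ℝ), F k t)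
      = w ^ (-b) * (poch g k * (c * w ^ (-a)) ^ k / (Nat.factorial k : ℝ)) := by
    intro k
    rw [hFdef]
    simp only
    rw [integral_const_mul, hval k]
    rw [h2 k, mul_pow]
    have := (hGpos k).ne'
    field_simp
  rw [funext hterm, tsum_mul_left]
  have habs : |c * w ^ (-a)| < 1 := by
    rw [abs_mul, abs_of_pos hwna]
    exact hx1
  rw [binomial_tsum habs]
  -- final algebra
  have hwac : 0 < w ^ a - c := by
    have : c ≤ |c| := le_abs_self c
    linarith
  have e3 : 1 - c * w ^ (-a) = (w ^ a - c) * w ^ (-a) := by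
    rw [Real.rpow_neg hw.le]
    field_simp
  rw [e3, Real.mul_rpow hwac.le hwna.le]
  have e4 : (w ^ (-a)) ^ (-g) = w ^ (a * g) := by
    rw [← Real.rpow_mul hw.le]
    ring_nf
  rw [e4]
  rw [show a * g - b = -b + a * g by ring, Real.rpow_add hw]
  ring
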